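/- Let E and H be real Hilbert spaces, Λ ⊆ H a nonempty closed convex set, and F : E × H → ℝ. Let μ, L > 0 and set κ := L/μ. Assume: (i) for every w ∈ E, the map λ ↦ F(w, λ) is differentiable and μ-strongly concave on Λ; (ii) the partial gradient map (w, λ) ↦ ∇_λ F(w, λ) is L-Lipschitz, i.e., ‖∇_λF(w₁, λ₁) − ∇_λF(w₂, λ₂)‖ ≤ L·‖(w₁, λ₁) − (w₂, λ₂)‖ for all pairs; (iii) λ* : E → H satisfies λ*(w) ∈ Λ and F(w, λ*(w)) = max_{λ ∈ Λ} F(w, λ) for every w ∈ E. Then λ* is κ-Lipschitz: ‖λ*(w₁) − λ*(w₂)‖ ≤ κ·‖w₁ − w₂‖ for all w₁, w₂ ∈ E. -/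

import Mathlib

open Filter Topology

/-- Slope of `f` along direction `v` tends to the inner product with the gradient. -/
lemma slope_tendsto_inner_gradient {H : Type*} [NormedAddCommGroup H]
    [InnerProductSpace ℝ H] [CompleteSpace H]
    (f : H → ℝ) (hf : Differentiable ℝ f) (y v : H) :
    Tendsto (fun a : ℝ => (f (y + a • v) - f y) / a) (𝓝[>] (0:ℝ))
      (𝓝 (inner ℝ (gradient f y) v : ℝ)) := by
  have h1 : HasFDerivAt f (InnerProductSpace.toDual ℝ H (gradient f y)) y :=
    ((hf y).hasGradientAt).hasFDerivAt
  have h2 : HasDerivAt (fun a : ℝ => y + a • v) v 0 := by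
    simpa using ((hasDerivAt_id (0:ℝ)).smul_const v).const_add y
  have h1' : HasFDerivAt f (InnerProductSpace.toDual ℝ H (gradient f y)) (y + (0:ℝ) • v) := by
    simpa using h1
  have hφ : HasDerivAt (fun a : ℝ => f (y + a • v))
      (inner ℝ (gradient f y) v : ℝ) 0 := by
    have h := h1'.comp_hasDerivAt 0 h2
    rw [InnerProductSpace.toDual_apply_apply] at h
    exact h
  have := hasDerivAt_iff_tendsto_slope.mp hφ
  have hmono : 𝓝[>] (0:ℝ) ≤ 𝓝[≠] (0:ℝ) :=
    nhdsWithin_mono _ (fun a ha => ne_of_gt ha)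
  have h3 := this.mono_left hmono
  refine h3.congr' ?_
  filter_upwards [self_mem_nhdsWithin] with a ha
  simp [slope_def_field, div_eq_inv_mul]

theorem lamstar_kappa_lipschitz
    {E H : Type*} [NormedAddCommGroup E] [InnerProductSpace ℝ E] [CompleteSpace E]
    [NormedAddCommGroup H] [InnerProductSpace ℝ H] [CompleteSpace H]
    (Λ : Set H) (hΛne : Λ.Nonempty) (hΛcl : IsClosed Λ) (hΛconv : Convex ℝ Λ)
    (F : E → H → ℝ) (μ L : ℝ) (hμ : 0 < μ) (hL : 0 < L)
    (κ : ℝ) (hκ : κ = L / μ)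
    (hdiff : ∀ w : E, Differentiable ℝ (F w))
    (hconc : ∀ w : E, ∀ x ∈ Λ, ∀ y ∈ Λ, ∀ a : ℝ, 0 ≤ a → a ≤ 1 →
      a * F w x + (1 - a) * F w y + μ / 2 * a * (1 - a) * ‖x - y‖ ^ 2
        ≤ F w (a • x + (1 - a) • y))
    (hlip : ∀ w₁ w₂ : E, ∀ l₁ l₂ : H,
      ‖gradient (F w₁) l₁ - gradient (F w₂) l₂‖
        ≤ L * Real.sqrt (‖w₁ - w₂‖ ^ 2 + ‖l₁ - l₂‖ ^ 2))
    (lam : E → H)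
    (hlam_mem : ∀ w : E, lam w ∈ Λ)
    (hlam_max : ∀ w : E, ∀ l ∈ Λ, F w l ≤ F w (lam w)) :
    ∀ w₁ w₂ : E, ‖lam w₁ - lam w₂‖ ≤ κ * ‖w₁ - w₂‖ := by
  -- gradient inequality from strong concavity
  have combo : ∀ (x y : H) (a : ℝ), a • x + (1 - a) • y = y + a • (x - y) := by
    intro x y a
    rw [sub_smul, one_smul, smul_sub]; abel
  have gradIneq : ∀ w : E, ∀ x ∈ Λ, ∀ y ∈ Λ,
      F w x - F w y + μ / 2 * ‖x - y‖ ^ 2 ≤ inner ℝ (gradient (F w) y) (x - y) := by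
    intro w x hx y hy
    have ht := slope_tendsto_inner_gradient (F w) (hdiff w) y (x - y)
    have ht2 : Tendsto (fun a : ℝ => F w x - F w y + μ / 2 * (1 - a) * ‖x - y‖ ^ 2)
        (𝓝[>] (0:ℝ)) (𝓝 (F w x - F w y + μ / 2 * ‖x - y‖ ^ 2)) := by
      have hc : Continuous (fun a : ℝ => F w x - F w y + μ / 2 * (1 - a) * ‖x - y‖ ^ 2) := by
        continuity
      have h := (hc.tendsto 0).mono_left (nhdsWithin_le_nhds (s := Set.Ioi (0:ℝ)))
      simpa using h
    have hbound : ∀ᶠ a in 𝓝[>] (0:ℝ),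
        F w x - F w y + μ / 2 * (1 - a) * ‖x - y‖ ^ 2 ≤ (F w (y + a • (x - y)) - F w y) / a := by
      filter_upwards [Ioo_mem_nhdsGT_of_mem (by constructor <;> norm_num : (0:ℝ) ∈ Set.Ico 0 1)]
        with a ha
      have h := hconc w x hx y hy a (le_of_lt ha.1) (le_of_lt ha.2)
      rw [combo] at h
      rw [le_div_iff₀ ha.1]
      nlinarith [h]
    exact le_of_tendsto_of_tendsto ht2 ht hbound
  -- variational inequality at the maximizer
  have VI : ∀ w : E, ∀ l ∈ Λ, (inner ℝ (gradient (F w) (lam w)) (l - lam w) : ℝ) ≤ 0 := by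
    intro w l hl
    have ht := slope_tendsto_inner_gradient (F w) (hdiff w) (lam w) (l - lam w)
    have hbound : ∀ᶠ a in 𝓝[>] (0:ℝ),
        (F w (lam w + a • (l - lam w)) - F w (lam w)) / a ≤ 0 := by
      filter_upwards [Ioo_mem_nhdsGT_of_mem (by constructor <;> norm_num : (0:ℝ) ∈ Set.Ico 0 1)]
        with a ha
      have hmem : lam w + a • (l - lam w) ∈ Λ := by
        rw [← combo]
        exact hΛconv hl (hlam_mem w) (le_of_lt ha.1) (by linarith [ha.2]) (by ring)
      have := hlam_max w _ hmem
      apply div_nonpos_of_nonpos_of_nonneg <;> [linarith; linarith [ha.1]]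
    exact le_of_tendsto ht hbound
  intro w₁ w₂
  rcases eq_or_lt_of_le (norm_nonneg (lam w₁ - lam w₂)) with h0 | h0
  · rw [← h0, hκ]; positivity
  have hg1 := gradIneq w₁ (lam w₂) (hlam_mem w₂) (lam w₁) (hlam_mem w₁)
  have hg2 := gradIneq w₁ (lam w₁) (hlam_mem w₁) (lam w₂) (hlam_mem w₂)
  have hVI1 := VI w₁ (lam w₂) (hlam_mem w₂)
  have hVI2 := VI w₂ (lam w₁) (hlam_mem w₁)
  have hnorm : ‖lam w₂ - lam w₁‖ = ‖lam w₁ - lam w₂‖ := norm_sub_rev _ _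
  rw [hnorm] at hg1
  have key : μ * ‖lam w₁ - lam w₂‖ ^ 2
      ≤ inner ℝ (gradient (F w₁) (lam w₂) - gradient (F w₂) (lam w₂)) (lam w₁ - lam w₂) := by
    have e1 : (inner ℝ (gradient (F w₁) (lam w₂) - gradient (F w₂) (lam w₂)) (lam w₁ - lam w₂) : ℝ)
        = inner ℝ (gradient (F w₁) (lam w₂)) (lam w₁ - lam w₂)
          - inner ℝ (gradient (F w₂) (lam w₂)) (lam w₁ - lam w₂) :=
      inner_sub_left _ _ _
    nlinarith [hg1, hg2, hVI1, hVI2, e1]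
  have hcs := real_inner_le_norm
    (gradient (F w₁) (lam w₂) - gradient (F w₂) (lam w₂)) (lam w₁ - lam w₂)
  have hlipw : ‖gradient (F w₁) (lam w₂) - gradient (F w₂) (lam w₂)‖ ≤ L * ‖w₁ - w₂‖ := by
    have h := hlip w₁ w₂ (lam w₂) (lam w₂)
    simpa [Real.sqrt_sq (norm_nonneg (w₁ - w₂))] using h
  have hmain : μ * ‖lam w₁ - lam w₂‖ ^ 2 ≤ L * ‖w₁ - w₂‖ * ‖lam w₁ - lam w₂‖ := by
    nlinarith [key, hcs, hlipw, h0]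
  rw [hκ, div_mul_eq_mul_div, le_div_iff₀ hμ]
  nlinarith [hmain, h0]
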